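/- arXiv:1207.4257 — 6 statements merged into one kernel-verified Lean document; each statement's English description precedes it below -/
import Mathlib

section
/- Let $L$ be a coalgebra (without counit) over a field $k$ with coproduct $\delta$, and suppose $\tau\delta = -\delta$ where $\tau$ is the flip map and the characteristic of $k$ is not 2. Then $(1 \otimes \delta)\delta = 0$; in particular $L$ is 2-conilpotent. -/
open TensorProduct

noncomputable section

variable (k : Type*) [Field k]

def Coassoc {V : Type*} [AddCommGroup V] [Module k V] (δ : V →ₗ[k] V ⊗[k] V) : Prop :=
  (TensorProduct.assoc k V V V).toLinearMap ∘ₗ (TensorProduct.map δ LinearMap.id) ∘ₗ δ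
    = (TensorProduct.map LinearMap.id δ) ∘ₗ δ

/-- An anti-cocommutative coalgebra (without counit) over a field of characteristic ≠ 2
satisfies `(1 ⊗ δ)δ = 0`; in particular it is 2-conilpotent, i.e. `(δ ⊗ 1)δ = 0`. -/
theorem anti_cocommutative_two_conilpotent
    {V : Type*} [AddCommGroup V] [Module k V]
    (hchar : (2 : k) ≠ 0)
    (δ : V →ₗ[k] V ⊗[k] V)
    (hcoassoc : Coassoc k δ)
    (hanti : (TensorProduct.comm k V V).toLinearMap ∘ₗ δ = -δ) :
    (TensorProduct.map LinearMap.id δ) ∘ₗ δ = 0 ∧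
      (TensorProduct.map δ LinearMap.id) ∘ₗ δ = 0 := by
  set A : V →ₗ[k] V ⊗[k] (V ⊗[k] V) := (TensorProduct.map LinearMap.id δ) ∘ₗ δ with hA
  -- the cyclic permutation a ⊗ (b ⊗ c) ↦ b ⊗ (c ⊗ a)
  set ρ : V ⊗[k] (V ⊗[k] V) →ₗ[k] V ⊗[k] (V ⊗[k] V) :=
    (TensorProduct.assoc k V V V).toLinearMap ∘ₗ
      (TensorProduct.comm k V (V ⊗[k] V)).toLinearMap with hρ
  have hρ3 : ρ ∘ₗ ρ ∘ₗ ρ = LinearMap.id := by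
    apply TensorProduct.ext'
    intro a x
    induction x using TensorProduct.induction_on with
    | zero => simp
    | tmul b c => simp [hρ]
    | add x y hx hy =>
      simp only [tmul_add, map_add] at hx hy ⊢
      rw [hx, hy]
  have hδ : δ = -((TensorProduct.comm k V V).toLinearMap ∘ₗ δ) := by rw [hanti]; simp
  have hswap : (TensorProduct.map δ LinearMap.id) ∘ₗ (TensorProduct.comm k V V).toLinearMap
      = (TensorProduct.comm k V (V ⊗[k] V)).toLinearMap ∘ₗ (TensorProduct.map LinearMap.id δ) := by
    apply TensorProduct.ext'
    intro a b
    simp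
  have key : A = -(ρ ∘ₗ A) := by
    calc A = (TensorProduct.assoc k V V V).toLinearMap ∘ₗ
            (TensorProduct.map δ LinearMap.id) ∘ₗ δ := hcoassoc.symm
      _ = (TensorProduct.assoc k V V V).toLinearMap ∘ₗ
            (TensorProduct.map δ LinearMap.id) ∘ₗ
            (-((TensorProduct.comm k V V).toLinearMap ∘ₗ δ)) := by rw [← hδ]
      _ = -((TensorProduct.assoc k V V V).toLinearMap ∘ₗ
            ((TensorProduct.map δ LinearMap.id) ∘ₗ (TensorProduct.comm k V V).toLinearMap) ∘ₗ δ) := by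
            simp only [LinearMap.comp_neg, LinearMap.neg_comp, LinearMap.comp_assoc]
      _ = -(ρ ∘ₗ A) := by rw [hswap, hρ, hA]; simp only [LinearMap.comp_assoc]
  have key2 : ρ ∘ₗ A = -(ρ ∘ₗ ρ ∘ₗ A) := by
    conv_lhs => rw [key]
    simp only [LinearMap.comp_neg]
  have key3 : ρ ∘ₗ ρ ∘ₗ A = -A := by
    conv_lhs => rw [key]
    have : ρ ∘ₗ ρ ∘ₗ (-(ρ ∘ₗ A)) = -((ρ ∘ₗ ρ ∘ₗ ρ) ∘ₗ A) := by
      simp only [LinearMap.comp_neg, LinearMap.comp_assoc]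
    rw [this, hρ3]
    simp
  have hAA : A = -A := by
    calc A = -(ρ ∘ₗ A) := key
      _ = -(-(ρ ∘ₗ ρ ∘ₗ A)) := by conv_lhs => rw [key2]
      _ = ρ ∘ₗ ρ ∘ₗ A := by ext v; simp
      _ = -A := key3
  have h2A : (2 : k) • A = 0 := by
    have h : A + A = 0 := by nth_rewrite 1 [hAA]; ext v; simp
    rw [two_smul]; exact h
  have hA0 : A = 0 := by
    have := congrArg (fun f => (2 : k)⁻¹ • f) h2A
    simpa [smul_smul, inv_mul_cancel₀ hchar] using this
  refine ⟨hA0, ?_⟩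
  have h2 : (TensorProduct.assoc k V V V).toLinearMap ∘ₗ
      (TensorProduct.map δ LinearMap.id) ∘ₗ δ = 0 := by
    rw [hcoassoc, ← hA, hA0]
  have := congrArg (fun f => (TensorProduct.assoc k V V V).symm.toLinearMap ∘ₗ f) h2
  simpa [← LinearMap.comp_assoc] using this
end
end

section
/- Let $L$ be an anti-cocommutative coalgebra without counit over a field of characteristic not 2. Then $\delta(L) \subseteq (\ker \delta) \otimes (\ker \delta)$. -/
open TensorProduct

noncomputable section

variable (k : Type*) [Field k]

/-- For an anti-cocommutative coalgebra without counit (char k ≠ 2),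
`δ(L) ⊆ (ker δ) ⊗ (ker δ)`. -/
theorem anti_cocommutative_delta_range_le_ker_tmul_ker
    {L : Type*} [AddCommGroup L] [Module k L]
    (hchar : (2 : k) ≠ 0)
    (δ : L →ₗ[k] L ⊗[k] L)
    (hcoassoc : Coassoc k δ)
    (hanti : (TensorProduct.comm k L L).toLinearMap ∘ₗ δ = -δ) :
    ∀ x : L, δ x ∈ LinearMap.range
      (TensorProduct.map (LinearMap.ker δ).subtype (LinearMap.ker δ).subtype) := by
  set c : L ⊗[k] L →ₗ[k] L ⊗[k] L := (TensorProduct.comm k L L).toLinearMap with hc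
  -- B = (1⊗δ)δ, A = (δ⊗1)δ
  set B : L →ₗ[k] L ⊗[k] (L ⊗[k] L) := (TensorProduct.map LinearMap.id δ) ∘ₗ δ with hBdef
  set A : L →ₗ[k] (L ⊗[k] L) ⊗[k] L := (TensorProduct.map δ LinearMap.id) ∘ₗ δ with hAdef
  have hanti' : ∀ y : L, c (δ y) = - δ y := by
    intro y; have := LinearMap.congr_fun hanti y; simpa [hc] using this
  have hassoc : ∀ y : L, (TensorProduct.assoc k L L L) (A y) = B y := by
    intro y; have := LinearMap.congr_fun hcoassoc y; simpa [hAdef, hBdef] using this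
  -- t23 B = -B
  have h23 : ∀ y : L, LinearMap.lTensor L c (B y) = - B y := by
    intro y
    have : LinearMap.lTensor L c ∘ₗ TensorProduct.map LinearMap.id δ
        = TensorProduct.map LinearMap.id (c ∘ₗ δ) := by
      ext a b; simp
    calc LinearMap.lTensor L c (B y)
        = TensorProduct.map LinearMap.id (c ∘ₗ δ) (δ y) := LinearMap.congr_fun this (δ y)
      _ = - B y := by
          rw [hc, hanti]
          have hneg : TensorProduct.map (LinearMap.id : L →ₗ[k] L) (-δ)
              = - (TensorProduct.map LinearMap.id δ : L ⊗[k] L →ₗ[k] L ⊗[k] (L ⊗[k] L)) := by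
            ext a b; simp [TensorProduct.tmul_neg]
          rw [hneg]; rfl
  -- t12 A = -A
  have h12 : ∀ y : L, LinearMap.rTensor L c (A y) = - A y := by
    intro y
    have : LinearMap.rTensor L c ∘ₗ TensorProduct.map δ LinearMap.id
        = TensorProduct.map (c ∘ₗ δ) LinearMap.id := by
      ext a b; simp
    calc LinearMap.rTensor L c (A y)
        = TensorProduct.map (c ∘ₗ δ) LinearMap.id (δ y) := LinearMap.congr_fun this (δ y)
      _ = - A y := by
          rw [hc, hanti]
          have hneg : TensorProduct.map (-δ) (LinearMap.id : L →ₗ[k] L)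
              = - (TensorProduct.map δ LinearMap.id : L ⊗[k] L →ₗ[k] (L ⊗[k] L) ⊗[k] L) := by
            ext a b; simp [TensorProduct.neg_tmul]
          rw [hneg]; rfl
  -- B = - comm' ∘ A
  have hCA : ∀ y : L, (TensorProduct.comm k (L ⊗[k] L) L) (A y) = - B y := by
    intro y
    have hmap : (TensorProduct.comm k (L ⊗[k] L) L).toLinearMap ∘ₗ TensorProduct.map δ LinearMap.id
        = (TensorProduct.map LinearMap.id δ) ∘ₗ c := by
      ext a b; simp [hc]
    have h1 : (TensorProduct.comm k (L ⊗[k] L) L) (A y)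
        = TensorProduct.map LinearMap.id δ (c (δ y)) := LinearMap.congr_fun hmap (δ y)
    rw [h1, hanti' y, map_neg]
    rfl
  -- the cyclic identity: comm' ∘ assoc.symm = t12' ∘ t23 where t12' = assoc ∘ rTensor c ∘ assoc.symm
  have hcyc : (TensorProduct.comm k (L ⊗[k] L) L).toLinearMap
        ∘ₗ (TensorProduct.assoc k L L L).symm.toLinearMap
      = ((TensorProduct.assoc k L L L).toLinearMap
          ∘ₗ LinearMap.rTensor L c ∘ₗ (TensorProduct.assoc k L L L).symm.toLinearMap)
        ∘ₗ LinearMap.lTensor L c := by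
    ext a b d; simp [hc]
  -- conclude B = 0
  have hB0 : ∀ y : L, B y = 0 := by
    intro y
    have hAs : (TensorProduct.assoc k L L L).symm (B y) = A y := by
      rw [← hassoc y]; simp
    have e1 : (TensorProduct.comm k (L ⊗[k] L) L) ((TensorProduct.assoc k L L L).symm (B y))
        = - B y := by rw [hAs]; exact hCA y
    have e2 : (TensorProduct.comm k (L ⊗[k] L) L) ((TensorProduct.assoc k L L L).symm (B y))
        = B y := by
      have h := LinearMap.congr_fun hcyc (B y)
      simp only [LinearMap.comp_apply, LinearEquiv.coe_coe] at h
      rw [h, h23 y, map_neg, hAs, map_neg, h12 y, neg_neg]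
      exact hassoc y
    have hBB : B y = - B y := e2.symm.trans e1
    have h2b : (2 : k) • B y = 0 := by
      rw [two_smul]; nth_rewrite 1 [hBB]; simp
    rcases smul_eq_zero.mp h2b with h | h
    · exact absurd h hchar
    · exact h
  have hA0 : ∀ y : L, A y = 0 := by
    intro y
    have := hassoc y
    rw [hB0 y] at this
    have : (TensorProduct.assoc k L L L) (A y) = (TensorProduct.assoc k L L L) 0 := by
      rw [this]; simp
    exact (TensorProduct.assoc k L L L).injective this
  -- flatness step
  intro x
  set K := LinearMap.ker δ with hK
  set ι : K →ₗ[k] L := K.subtype with hι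
  have hex1 : Function.Exact (LinearMap.lTensor L ι) (LinearMap.lTensor L δ) :=
    Module.Flat.lTensor_exact L δ.exact_subtype_ker_map
  have hδx : LinearMap.lTensor L δ (δ x) = 0 := by
    have := hB0 x
    rw [hBdef] at this
    exact this
  obtain ⟨y, hy⟩ := (hex1 (δ x)).mp hδx
  -- now rTensor δ kills y after injective lTensor ι
  have hinj : Function.Injective (LinearMap.lTensor (L ⊗[k] L) ι) :=
    Module.Flat.lTensor_preserves_injective_linearMap ι K.injective_subtype
  have hswap : LinearMap.rTensor L δ ∘ₗ LinearMap.lTensor L ι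
      = LinearMap.lTensor (L ⊗[k] L) ι ∘ₗ LinearMap.rTensor K δ := by
    rw [LinearMap.rTensor_comp_lTensor, LinearMap.lTensor_comp_rTensor]
  have h0 : LinearMap.lTensor (L ⊗[k] L) ι (LinearMap.rTensor K δ y) = 0 := by
    have hsw := LinearMap.congr_fun hswap y
    simp only [LinearMap.comp_apply] at hsw
    rw [← hsw, hy]
    exact hA0 x
  have hy0 : LinearMap.rTensor K δ y = 0 := by
    apply hinj; rw [h0]; simp
  have hex2 : Function.Exact (LinearMap.rTensor K ι) (LinearMap.rTensor K δ) :=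
    Module.Flat.rTensor_exact K δ.exact_subtype_ker_map
  obtain ⟨z, hz⟩ := (hex2 y).mp hy0
  refine ⟨z, ?_⟩
  rw [← hy, ← hz, ← LinearMap.lTensor_comp_rTensor]
  rfl

end
end

section
/- Let $\mathfrak{g} = kx \oplus ky$ be the 2-dimensional Lie algebra with $[x,y] = y$, and let $\lambda \in k$. Define $\delta : \mathfrak{g} \to \mathfrak{g} \otimes \mathfrak{g}$ by $\delta(x) = \lambda\, y \otimes y$ and $\delta(y) = 0$. Then $\delta$ is coassociative, and for all $a, b \in \mathfrak{g}$ the compatibility condition $\delta([a,b]) = b_1 \otimes [a,b_2] + [a,b_1] \otimes b_2 + [a_1,b] \otimes a_2 + a_1 \otimes [a_2,b] + [\delta(a),\delta(b)]$ holds (where the bracket on $\mathfrak{g} \otimes \mathfrak{g}$ is the commutator inside $U(\mathfrak{g}) \otimes U(\mathfrak{g})$). -/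
open TensorProduct

noncomputable section

variable (k : Type*) [Field k]

abbrev UEA (L : Type*) [LieRing L] [LieAlgebra k L] := UniversalEnvelopingAlgebra k L

/-- The canonical embedding `L → U(L)`, as a linear map. -/
def emb (L : Type*) [LieRing L] [LieAlgebra k L] : L →ₗ[k] UEA k L :=
  letI := LieRing.ofAssociativeRing (A := UEA k L)
  (UniversalEnvelopingAlgebra.ι k).toLinearMap

/-- The canonical map `L ⊗ L → U(L) ⊗ U(L)`. -/
def emb2 (L : Type*) [LieRing L] [LieAlgebra k L] :
    L ⊗[k] L →ₗ[k] UEA k L ⊗[k] UEA k L :=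
  TensorProduct.map (emb k L) (emb k L)

/-- The compatibility condition (E1.1.1)=(E1.2.2) for a coassociative Lie algebra,
stated inside `U(L) ⊗ U(L)`, where brackets are ring commutators.  (It encodes both
the identity `δ([a,b]) = b₁ ⊗ [a,b₂] + [a,b₁] ⊗ b₂ + [a₁,b] ⊗ a₂ + a₁ ⊗ [a₂,b] +
[δ(a),δ(b)]` and the requirement that `[δ(a),δ(b)]` lies in `L ⊗ L`.) -/
def Compat {L : Type*} [LieRing L] [LieAlgebra k L] (δ : L →ₗ[k] L ⊗[k] L) : Prop :=
  ∀ a b : L,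
    emb2 k L (δ ⁅a, b⁆) =
      ⁅(emb k L a) ⊗ₜ[k] (1 : UEA k L) + (1 : UEA k L) ⊗ₜ[k] (emb k L a), emb2 k L (δ b)⁆ +
      ⁅emb2 k L (δ a), (emb k L b) ⊗ₜ[k] (1 : UEA k L) + (1 : UEA k L) ⊗ₜ[k] (emb k L b)⁆ +
      ⁅emb2 k L (δ a), emb2 k L (δ b)⁆

/-- Example 1.4: on the 2-dimensional non-abelian Lie algebra with basis `x, y`,
`[x,y] = y`, the coproduct `δ(x) = λ y ⊗ y`, `δ(y) = 0` makes it a coassociative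
Lie algebra. -/
theorem example_two_dim_coassociative_lie
    {L : Type*} [LieRing L] [LieAlgebra k L]
    (b : Module.Basis (Fin 2) k L)
    (hbracket : ⁅b 0, b 1⁆ = b 1)
    (lam : k)
    (δ : L →ₗ[k] L ⊗[k] L)
    (hδx : δ (b 0) = lam • (b 1 ⊗ₜ[k] b 1))
    (hδy : δ (b 1) = 0) :
    Coassoc k δ ∧ Compat k δ := by
  constructor
  · apply b.ext
    intro i
    fin_cases i <;>
      simp [Coassoc, LinearMap.comp_apply, hδx, hδy, TensorProduct.map_tmul]
  · intro a c
    letI := LieRing.ofAssociativeRing (A := UEA k L)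
    set X : UEA k L := emb k L (b 0) with hX
    set Y : UEA k L := emb k L (b 1) with hY
    have hXYlie : ⁅X, Y⁆ = Y := by
      have h1 := (UniversalEnvelopingAlgebra.ι k (L := L)).map_lie (b 0) (b 1)
      rw [hbracket] at h1
      rw [hX, hY]
      simp only [emb, LieHom.coe_toLinearMap]
      exact h1.symm
    have hyx : ⁅b 1, b 0⁆ = -b 1 := by rw [← lie_skew, hbracket]
    have key : ∀ u v : UEA k L,
        ⁅u ⊗ₜ[k] (1 : UEA k L) + (1 : UEA k L) ⊗ₜ[k] u, v ⊗ₜ[k] v⁆ =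
          ⁅u, v⁆ ⊗ₜ[k] v + v ⊗ₜ[k] ⁅u, v⁆ := by
      intro u v
      simp only [Ring.lie_def, add_mul, mul_add, Algebra.TensorProduct.tmul_mul_tmul,
        one_mul, mul_one, sub_tmul, tmul_sub]
      abel
    have ha := (Module.Basis.sum_repr b a).symm
    have hc := (Module.Basis.sum_repr b c).symm
    rw [Fin.sum_univ_two] at ha hc
    set p := b.repr a 0
    set q := b.repr a 1
    set r := b.repr c 0
    set s := b.repr c 1
    have hlie : ⁅a, c⁆ = (p * s - q * r) • b 1 := by
      rw [ha, hc]
      simp only [add_lie, lie_add, smul_lie, lie_smul, lie_self, hbracket, hyx, smul_zero,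
        zero_add, add_zero, smul_smul, smul_neg]
      module
    have hδa : δ a = (p * lam) • (b 1 ⊗ₜ[k] b 1) := by
      rw [ha]; simp [hδx, hδy, smul_smul]
    have hδc : δ c = (r * lam) • (b 1 ⊗ₜ[k] b 1) := by
      rw [hc]; simp [hδx, hδy, smul_smul]
    have hea : emb k L a = p • X + q • Y := by
      rw [ha, map_add, map_smul, map_smul]
    have hec : emb k L c = r • X + s • Y := by
      rw [hc, map_add, map_smul, map_smul]
    have hbase : ∀ u : UEA k L, ⁅u, Y⁆ ⊗ₜ[k] Y + Y ⊗ₜ[k] ⁅u, Y⁆ = 0 → True := fun _ _ => trivial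
    have hAY : ⁅p • X + q • Y, Y⁆ = p • Y := by
      simp [add_lie, smul_lie, lie_self, hXYlie]
    have hBY : ⁅r • X + s • Y, Y⁆ = r • Y := by
      simp [add_lie, smul_lie, lie_self, hXYlie]
    have he2 : emb2 k L (b 1 ⊗ₜ[k] b 1) = Y ⊗ₜ[k] Y := rfl
    rw [hlie, hδa, hδc, hea, hec]
    simp only [map_smul, hδy, smul_zero, map_zero, he2]
    have sl : ∀ (t : k) (u v : UEA k L ⊗[k] UEA k L), ⁅t • u, v⁆ = t • ⁅u, v⁆ := by
      intro t u v
      simp only [Ring.lie_def, smul_mul_assoc, mul_smul_comm, smul_sub]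
    have ls : ∀ (t : k) (u v : UEA k L ⊗[k] UEA k L), ⁅u, t • v⁆ = t • ⁅u, v⁆ := by
      intro t u v
      simp only [Ring.lie_def, smul_mul_assoc, mul_smul_comm, smul_sub]
    have self0 : ∀ u : UEA k L ⊗[k] UEA k L, ⁅u, u⁆ = 0 := by
      intro u; simp only [Ring.lie_def, sub_self]
    have skew : ∀ u v : UEA k L ⊗[k] UEA k L, ⁅u, v⁆ = -⁅v, u⁆ := by
      intro u v; simp only [Ring.lie_def, neg_sub]
    simp only [sl, ls, self0, smul_zero, add_zero, smul_smul]
    rw [key, hAY, skew, key, hBY]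
    simp only [← smul_tmul', tmul_smul, smul_add, smul_neg, smul_smul]
    module

end
end

section
/- Let $L$ be a coalgebra without counit with coproduct $\delta$ such that $\delta(L)$ is 1-dimensional and $(\delta \otimes 1)\delta \neq 0$, over an algebraically closed field. Then there exists $0 \neq T \in L$ such that $T \otimes T$ spans $\delta(L)$. -/
open TensorProduct

noncomputable section

variable (k : Type*) [Field k]

/-- Over a field, a nonzero vector admits a dual functional taking value 1 on it. -/
lemma exists_dual_one {M : Type*} [AddCommGroup M] [Module k M] {x : M} (hx : x ≠ 0) :
    ∃ f : Module.Dual k M, f x = 1 := by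
  have : ¬ ∀ f : Module.Dual k M, f x = 0 := by
    rw [Module.forall_dual_apply_eq_zero_iff]; exact hx
  push_neg at this
  obtain ⟨f, hf⟩ := this
  exact ⟨(f x)⁻¹ • f, by simp [inv_mul_cancel₀ hf]⟩

/-- Left cancellation for tensor products over a field. -/
lemma tmul_left_cancel {M N : Type*} [AddCommGroup M] [Module k M]
    [AddCommGroup N] [Module k N] {v : M} (hv : v ≠ 0) {t : N}
    (h : v ⊗ₜ[k] t = (0 : M ⊗[k] N)) : t = 0 := by
  obtain ⟨g, hg⟩ := exists_dual_one k hv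
  have := congrArg (fun z => (TensorProduct.lid k N) ((TensorProduct.map g LinearMap.id) z)) h
  simpa [hg] using this

/-- Right cancellation for tensor products over a field. -/
lemma tmul_right_cancel {M N : Type*} [AddCommGroup M] [Module k M]
    [AddCommGroup N] [Module k N] {v : N} (hv : v ≠ 0) {t : M}
    (h : t ⊗ₜ[k] v = (0 : M ⊗[k] N)) : t = 0 := by
  obtain ⟨g, hg⟩ := exists_dual_one k hv
  have := congrArg (fun z => (TensorProduct.rid k M) ((TensorProduct.map LinearMap.id g) z)) h
  simpa [hg] using this

/-- Lemma 3.8(b): if `δ(L)` is 1-dimensional and `L` is not 2-conilpotent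
(i.e. `(δ ⊗ 1)δ ≠ 0`), over an algebraically closed field, then `δ(L)` is spanned by
an element of the form `T ⊗ T` with `T ≠ 0`. -/
theorem delta_range_spanned_by_T_tmul_T [IsAlgClosed k]
    {L : Type*} [AddCommGroup L] [Module k L]
    (δ : L →ₗ[k] L ⊗[k] L)
    (hcoassoc : Coassoc k δ)
    (hdim : Module.finrank k (LinearMap.range δ) = 1)
    (hnot2 : (TensorProduct.map δ LinearMap.id) ∘ₗ δ ≠ 0) :
    ∃ T : L, T ≠ 0 ∧ LinearMap.range δ = Submodule.span k {T ⊗ₜ[k] T} := by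
  classical
  -- Step 1: a spanning vector E of range δ
  obtain ⟨v₀, hv₀, hall⟩ := finrank_eq_one_iff'.mp hdim
  set E : L ⊗[k] L := (v₀ : L ⊗[k] L) with hEdef
  have hE0 : E ≠ 0 := fun h => hv₀ (Subtype.coe_injective h)
  have hrange : LinearMap.range δ = Submodule.span k {E} := by
    apply le_antisymm
    · intro y hy
      obtain ⟨c, hc⟩ := hall ⟨y, hy⟩
      have : c • E = y := congrArg Subtype.val hc
      rw [← this]
      exact Submodule.smul_mem _ _ (Submodule.mem_span_singleton_self E)
    · rw [Submodule.span_le, Set.singleton_subset_iff]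
      exact v₀.2
  -- Step 2: the functional φ with δ y = φ y • E
  have hmem : ∀ y : L, δ y ∈ Submodule.span k ({E} : Set (L ⊗[k] L)) := fun y =>
    hrange ▸ LinearMap.mem_range_self δ y
  let e := LinearEquiv.toSpanNonzeroSingleton k (L ⊗[k] L) E hE0
  let φ : L →ₗ[k] k := e.symm.toLinearMap ∘ₗ (δ.codRestrict (Submodule.span k {E}) hmem)
  have hφ : ∀ y : L, δ y = φ y • E := by
    intro y
    have : e (φ y) = ⟨δ y, hmem y⟩ := by
      simp only [φ, LinearMap.comp_apply, LinearEquiv.coe_toLinearMap, e.apply_symm_apply]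
      rfl
    have h2 := congrArg Subtype.val this
    simpa [LinearEquiv.toSpanNonzeroSingleton, e] using h2.symm
  -- Step 3: structure of (δ ⊗ 1) and (1 ⊗ δ)
  let q : L ⊗[k] L →ₗ[k] L :=
    (TensorProduct.lid k L).toLinearMap ∘ₗ TensorProduct.map φ LinearMap.id
  let q' : L ⊗[k] L →ₗ[k] L :=
    (TensorProduct.rid k L).toLinearMap ∘ₗ TensorProduct.map LinearMap.id φ
  have hmapδ : TensorProduct.map δ (LinearMap.id (R := k) (M := L))
      = (TensorProduct.mk k (L ⊗[k] L) L E) ∘ₗ q := by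
    apply TensorProduct.ext'
    intro a b
    simp [q, hφ a, TensorProduct.smul_tmul']
  have hmapδ' : TensorProduct.map (LinearMap.id (R := k) (M := L)) δ
      = ((TensorProduct.mk k L (L ⊗[k] L)).flip E) ∘ₗ q' := by
    apply TensorProduct.ext'
    intro a b
    simp [q', hφ b, TensorProduct.smul_tmul', TensorProduct.tmul_smul]
  set w : L := q E with hw
  set u' : L := q' E with hu'
  have h1 : TensorProduct.map δ LinearMap.id E = E ⊗ₜ[k] w := by
    rw [hmapδ]; rfl
  have h2 : TensorProduct.map LinearMap.id δ E = u' ⊗ₜ[k] E := by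
    rw [hmapδ']; rfl
  -- Step 4: nonvanishing
  have hex : ∃ x : L, TensorProduct.map δ LinearMap.id (δ x) ≠ 0 := by
    by_contra h
    push_neg at h
    exact hnot2 (LinearMap.ext fun x => h x)
  obtain ⟨x, hx⟩ := hex
  have hδx : δ x = φ x • E := hφ x
  have hφx : φ x ≠ 0 := by
    intro h0
    apply hx
    rw [hδx, h0, zero_smul, map_zero]
  have hEw : E ⊗ₜ[k] w ≠ 0 := by
    intro h0
    apply hx
    rw [hδx, map_smul, h1, h0, smul_zero]
  have hw0 : w ≠ 0 := fun h => hEw (by rw [h, TensorProduct.tmul_zero])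
  -- coassociativity at x
  have heq : (TensorProduct.assoc k L L L) (E ⊗ₜ[k] w) = u' ⊗ₜ[k] E := by
    have hc := congrArg (fun F => F x) hcoassoc
    simp only [LinearMap.comp_apply, LinearEquiv.coe_toLinearMap] at hc
    rw [hδx, map_smul, map_smul, h1, map_smul, h2] at hc
    exact smul_right_injective _ hφx hc
  -- Step 5: E is a pure tensor
  obtain ⟨f, hf⟩ := exists_dual_one k hw0
  let r : L ⊗[k] L →ₗ[k] L :=
    (TensorProduct.rid k L).toLinearMap ∘ₗ TensorProduct.map LinearMap.id f
  let C : L ⊗[k] (L ⊗[k] L) →ₗ[k] L ⊗[k] L := TensorProduct.map LinearMap.id r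
  have hA : C ∘ₗ (TensorProduct.assoc k L L L).toLinearMap ∘ₗ
      ((TensorProduct.mk k (L ⊗[k] L) L).flip w) = LinearMap.id := by
    apply TensorProduct.ext'
    intro a b
    simp [C, r, hf, TensorProduct.tmul_smul]
  have hEvu : E = u' ⊗ₜ[k] (r E) := by
    have := congrArg C heq
    have hl : C ((TensorProduct.assoc k L L L) (E ⊗ₜ[k] w)) = E := by
      have := congrArg (fun F => F E) hA
      simpa using this
    have hr : C (u' ⊗ₜ[k] E) = u' ⊗ₜ[k] (r E) := by simp [C]
    rw [hl, hr] at this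
    exact this
  set u : L := r E with hu
  have hu0 : u ≠ 0 := fun h => hE0 (by rw [hEvu, h, TensorProduct.tmul_zero])
  have hv0' : u' ≠ 0 := fun h => hE0 (by rw [hEvu, h, TensorProduct.zero_tmul])
  -- Step 6: u ⊗ w = u' ⊗ u
  have heq2 : u ⊗ₜ[k] w = u' ⊗ₜ[k] u := by
    have h3 : (TensorProduct.assoc k L L L) ((u' ⊗ₜ[k] u) ⊗ₜ[k] w) = u' ⊗ₜ[k] (u' ⊗ₜ[k] u) := by
      rw [← hEvu, heq, hEvu]
    rw [TensorProduct.assoc_tmul] at h3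
    have h4 : u' ⊗ₜ[k] (u ⊗ₜ[k] w - u' ⊗ₜ[k] u) = 0 := by
      rw [TensorProduct.tmul_sub, h3, sub_self]
    have := tmul_left_cancel k hv0' h4
    exact sub_eq_zero.mp this
  -- Step 7: u' = c • u
  obtain ⟨g, hg⟩ := exists_dual_one k hu0
  have hvc : u' = g w • u := by
    have := congrArg (fun z => (TensorProduct.rid k L) ((TensorProduct.map LinearMap.id g) z)) heq2
    simpa [hg] using this.symm
  set c : k := g w with hc
  have hEc : E = c • (u ⊗ₜ[k] u) := by
    rw [hEvu, hvc, TensorProduct.smul_tmul']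
  have hc0 : c ≠ 0 := fun h => hE0 (by rw [hEc, h, zero_smul])
  -- Step 8: square root
  obtain ⟨μ, hμ⟩ := IsAlgClosed.exists_pow_nat_eq c (n := 2) (by norm_num)
  have hμ0 : μ ≠ 0 := fun h => hc0 (by rw [← hμ, h, zero_pow (by norm_num)])
  refine ⟨μ • u, smul_ne_zero hμ0 hu0, ?_⟩
  have hTT : (μ • u) ⊗ₜ[k] (μ • u) = E := by
    rw [hEc, TensorProduct.smul_tmul_smul, ← sq, hμ]
  rw [hrange, hTT]

end
end

section
/- The Lie algebra $sl_2(k)$ over an algebraically closed field $k$ of characteristic zero has small centralizers: for every nonzero $x \in sl_2(k)$, the centralizer $\{y \in sl_2(k) : [x,y] = 0\}$ is 1-dimensional. -/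
noncomputable section

/-- `sl₂(k)` (k algebraically closed of characteristic zero, presented by its
standard basis `e, f, h`) has small centralizers: the centralizer of every
nonzero element is 1-dimensional. -/
theorem sl2_small_centralizers
    (k : Type*) [Field k] [IsAlgClosed k] [CharZero k]
    {L : Type*} [LieRing L] [LieAlgebra k L]
    (b : Module.Basis (Fin 3) k L)
    (e f h : L) (he : e = b 0) (hf : f = b 1) (hh : h = b 2)
    (hef : ⁅e, f⁆ = h) (hhe : ⁅h, e⁆ = (2 : k) • e) (hhf : ⁅h, f⁆ = -((2 : k) • f)) :
    ∀ x : L, x ≠ 0 →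
      Module.finrank k (LinearMap.ker (LieAlgebra.ad k L x)) = 1 := by
  intro x hx
  have h2 : (2 : k) ≠ 0 := two_ne_zero
  have hfe : ⁅f, e⁆ = -h := by rw [← lie_skew, hef]
  have heh : ⁅e, h⁆ = -((2:k) • e) := by rw [← lie_skew, hhe]
  have hfh : ⁅f, h⁆ = (2:k) • f := by rw [← lie_skew, hhf]; simp
  set a := b.repr x 0 with ha
  set B := b.repr x 1 with hB
  set c := b.repr x 2 with hc
  have hxe : x = a • e + B • f + c • h := by
    rw [he, hf, hh]
    conv_lhs => rw [← b.sum_repr x]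
    rw [Fin.sum_univ_three]
  have habc : ¬(a = 0 ∧ B = 0 ∧ c = 0) := by
    rintro ⟨h1, h2', h3⟩
    apply hx
    rw [hxe, h1, h2', h3]; simp
  have key : LinearMap.ker (LieAlgebra.ad k L x) = Submodule.span k {x} := by
    apply le_antisymm
    · intro y hy
      rw [LinearMap.mem_ker, LieAlgebra.ad_apply] at hy
      set p := b.repr y 0 with hp
      set q := b.repr y 1 with hq
      set r := b.repr y 2 with hr
      have hye : y = p • e + q • f + r • h := by
        rw [he, hf, hh]
        conv_lhs => rw [← b.sum_repr y]
        rw [Fin.sum_univ_three]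
      have hbr : ⁅x, y⁆ = ((2:k)*c*p - (2:k)*a*r) • b 0
          + ((2:k)*B*r - (2:k)*c*q) • b 1 + (a*q - B*p) • b 2 := by
        rw [hxe, hye]
        simp only [lie_add, add_lie, lie_smul, smul_lie, hef, hfe, hhe, hhf, heh, hfh,
          lie_self, smul_zero]
        rw [he, hf, hh]
        module
      rw [hy] at hbr
      have e0 : (2:k)*c*p - (2:k)*a*r = 0 := by
        have := congrArg (fun z => b.repr z 0) hbr
        simpa [Finsupp.single_apply] using this.symm
      have e1 : (2:k)*B*r - (2:k)*c*q = 0 := by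
        have := congrArg (fun z => b.repr z 1) hbr
        simpa [Finsupp.single_apply] using this.symm
      have e2 : a*q - B*p = 0 := by
        have := congrArg (fun z => b.repr z 2) hbr
        simpa [Finsupp.single_apply] using this.symm
      have e0' : c*p = a*r := by
        have h' := sub_eq_zero.mp e0
        exact mul_left_cancel₀ h2 (by linear_combination h')
      have e1' : B*r = c*q := by
        have h' := sub_eq_zero.mp e1
        exact mul_left_cancel₀ h2 (by linear_combination h')
      have e2' : a*q = B*p := sub_eq_zero.mp e2
      -- find t with p = t*a, q = t*B, r = t*c
      obtain ⟨t, ht0, ht1, ht2⟩ : ∃ t : k, p = t*a ∧ q = t*B ∧ r = t*c := by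
        by_cases hc0 : c = 0
        · rw [hc0, zero_mul] at e0' e1'
          by_cases ha0 : a = 0
          · have hB0 : B ≠ 0 := by tauto
            have hr0 : r = 0 := by
              rcases mul_eq_zero.mp e1' with h' | h' <;> tauto
            refine ⟨q / B, ?_, ?_, ?_⟩
            · rw [ha0, mul_zero]
              rw [ha0, zero_mul] at e2'
              rcases mul_eq_zero.mp e2'.symm with h' | h' <;> tauto
            · field_simp
            · simp [hr0, hc0]
          · have hr0 : r = 0 := by
              rcases mul_eq_zero.mp e0'.symm with h' | h' <;> tauto
            refine ⟨p / a, ?_, ?_, ?_⟩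
            · field_simp
            · field_simp; linear_combination e2'
            · simp [hr0, hc0]
        · refine ⟨r / c, ?_, ?_, ?_⟩
          · field_simp; linear_combination e0'
          · field_simp; linear_combination -e1'
          · field_simp
      have : y = t • x := by
        rw [hxe, hye, ht0, ht1, ht2]
        module
      rw [this]
      exact Submodule.smul_mem _ _ (Submodule.mem_span_singleton_self x)
    · rw [Submodule.span_le, Set.singleton_subset_iff]
      simp [LinearMap.mem_ker, LieAlgebra.ad_apply]
  rw [key, finrank_span_singleton hx]

end
end

section
/- Let $\mathfrak{g}$ be the 3-dimensional Lie algebra over a field $k$ with basis $\{x, y, z\}$ and brackets $[x,y] = y$, $[z,y] = 0$, $[z,x] = -z + \lambda y$ for a fixed $\lambda \in k$. Define $\delta(x) = \delta(y) = 0$ and $\delta(z) = x \otimes y - y \otimes x$. Then $\delta$ is coassociative and $(\mathfrak{g}, \delta)$ satisfies the compatibility condition of a coassociative Lie algebra, and moreover $\tau\delta = -\delta$ (anti-cocommutativity) and $(\delta \otimes 1)\delta = 0$ (2-conilpotency). -/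
open TensorProduct

noncomputable section

variable (k : Type*) [Field k]

/-- Example 4.2: the 3-dimensional Lie algebra with basis `x, y, z`,
`[x,y] = y`, `[z,y] = 0`, `[z,x] = -z + λy`, with `δ(x) = δ(y) = 0` and
`δ(z) = x ⊗ y - y ⊗ x`, is a coassociative Lie algebra which is
anti-cocommutative and 2-conilpotent. -/
theorem example_three_dim_anti_cocommutative
    {L : Type*} [LieRing L] [LieAlgebra k L]
    (b : Module.Basis (Fin 3) k L)
    (x y z : L) (hx : x = b 0) (hy : y = b 1) (hz : z = b 2)
    (lam : k)
    (hxy : ⁅x, y⁆ = y) (hzy : ⁅z, y⁆ = 0) (hzx : ⁅z, x⁆ = -z + lam • y)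
    (δ : L →ₗ[k] L ⊗[k] L)
    (hδx : δ x = 0) (hδy : δ y = 0)
    (hδz : δ z = x ⊗ₜ[k] y - y ⊗ₜ[k] x) :
    Coassoc k δ ∧ Compat k δ ∧
      (TensorProduct.comm k L L).toLinearMap ∘ₗ δ = -δ ∧
      (TensorProduct.map δ LinearMap.id) ∘ₗ δ = 0 := by
  subst hx hy hz
  have hyx : ⁅b 1, b 0⁆ = -(b 1) := by rw [← lie_skew, hxy]
  have hyz : ⁅b 1, b 2⁆ = 0 := by rw [← lie_skew, hzy, neg_zero]
  have hxz : ⁅b 0, b 2⁆ = b 2 - lam • b 1 := by rw [← lie_skew, hzx]; abel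
  refine ⟨?_, ?_, ?_, ?_⟩
  · unfold Coassoc
    refine Module.Basis.ext b ?_
    intro i
    fin_cases i <;> simp [hδx, hδy, hδz, map_sub]
  · -- Compat
    set X := emb k L (b 0) with hX
    set Y := emb k L (b 1) with hY
    set Z := emb k L (b 2) with hZ
    have hUxy : X * Y - Y * X = Y := by
      letI := LieRing.ofAssociativeRing (A := UEA k L)
      letI := LieAlgebra.ofAssociativeAlgebra (R := k) (A := UEA k L)
      have := (UniversalEnvelopingAlgebra.ι k (L := L)).map_lie (b 0) (b 1)
      rw [hxy] at this
      simpa [Ring.lie_def, emb, hX, hY] using this.symm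
    have hUzy : Z * Y - Y * Z = 0 := by
      letI := LieRing.ofAssociativeRing (A := UEA k L)
      letI := LieAlgebra.ofAssociativeAlgebra (R := k) (A := UEA k L)
      have := (UniversalEnvelopingAlgebra.ι k (L := L)).map_lie (b 2) (b 1)
      rw [hzy] at this
      simpa [Ring.lie_def, emb, hY, hZ] using this.symm
    have hUzx : Z * X - X * Z = -Z + lam • Y := by
      letI := LieRing.ofAssociativeRing (A := UEA k L)
      letI := LieAlgebra.ofAssociativeAlgebra (R := k) (A := UEA k L)
      have := (UniversalEnvelopingAlgebra.ι k (L := L)).map_lie (b 2) (b 0)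
      rw [hzx] at this
      simpa [Ring.lie_def, emb, hX, hY, hZ] using this.symm
    have hYX : Y * X = X * Y - Y := by
      have h1 : X * Y = Y + Y * X := sub_eq_iff_eq_add.mp hUxy
      rw [h1]; abel
    have hZY : Z * Y = Y * Z := sub_eq_zero.mp hUzy
    have hZX : Z * X = X * Z + (- Z + lam • Y) := sub_eq_iff_eq_add'.mp hUzx
    intro a c
    obtain ⟨a0, a1, a2, ha⟩ : ∃ a0 a1 a2 : k, a = a0 • b 0 + a1 • b 1 + a2 • b 2 :=
      ⟨b.repr a 0, b.repr a 1, b.repr a 2, by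
        have := b.sum_repr a
        rw [Fin.sum_univ_three] at this
        exact this.symm⟩
    obtain ⟨c0, c1, c2, hc⟩ : ∃ c0 c1 c2 : k, c = c0 • b 0 + c1 • b 1 + c2 • b 2 :=
      ⟨b.repr c 0, b.repr c 1, b.repr c 2, by
        have := b.sum_repr c
        rw [Fin.sum_univ_three] at this
        exact this.symm⟩
    rw [ha, hc]
    simp only [lie_add, add_lie, lie_smul, smul_lie, lie_self, hxy, hzy, hzx, hyx, hyz, hxz,
      map_add, map_smul, map_sub, map_zero, map_neg, smul_zero, zero_add, add_zero, smul_add,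
      smul_neg, smul_sub, hδx, hδy, hδz]
    simp only [emb2, map_tmul, map_sub, map_add, map_smul, map_neg, ← hX, ← hY, ← hZ,
      Ring.lie_def, mul_add, add_mul, mul_sub, sub_mul, smul_mul_assoc, mul_smul_comm,
      Algebra.TensorProduct.tmul_mul_tmul, one_mul, mul_one, neg_mul, mul_neg,
      hYX, hZY, hZX]
    simp only [sub_tmul, tmul_sub, add_tmul, tmul_add, tmul_smul, ← smul_tmul', neg_tmul,
      tmul_neg]
    module
  · refine Module.Basis.ext b ?_
    intro i
    fin_cases i <;> simp [hδx, hδy, hδz, map_sub]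
  · refine Module.Basis.ext b ?_
    intro i
    fin_cases i <;> simp [hδx, hδy, hδz, map_sub]

end
end
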